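/- Let Γ be a finitely generated group that admits an injective group homomorphism Γ → GL(n,ℝ) for some n (Γ is linear). Suppose Γ acts on a Hausdorff topological space X and the action is properly discontinuous, i.e. for all compact subsets K, L ⊆ X the set {γ ∈ Γ : γ·K ∩ L ≠ ∅} is finite. Then Γ has a subgroup of finite index whose action on X is free. -/

import Mathlib

open Pointwise

lemma pow_expand {S : Type*} [Ring S] (x : S) (ℓ : ℕ) (hℓ : 1 ≤ ℓ) :
    ∃ B : S, (x + 1) ^ ℓ = x * x * B + ℓ • x + 1 := by
  obtain ⟨ℓ', rfl⟩ : ∃ ℓ', ℓ = ℓ' + 1 := ⟨ℓ - 1, (Nat.succ_pred_eq_of_pos hℓ).symm⟩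
  refine ⟨∑ i ∈ Finset.range ℓ', x ^ i * ((ℓ' + 1).choose (i + 2) : S), ?_⟩
  rw [(Commute.one_right x).add_pow]
  simp only [one_pow, mul_one]
  rw [Finset.sum_range_succ' _ (ℓ' + 1), Finset.sum_range_succ' _ ℓ']
  simp only [pow_zero, one_mul, Nat.choose_zero_right, Nat.cast_one, pow_one,
    Nat.choose_one_right, Finset.mul_sum]
  rw [nsmul_eq_mul]
  congr 1
  congr 1
  · apply Finset.sum_congr rfl
    intro i _
    rw [show i + 1 + 1 = 2 + i from by omega, pow_add, pow_two]
    simp [mul_assoc]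
  · simp only [zero_add, pow_one, Nat.choose_one_right]
    exact (Nat.cast_commute (ℓ' + 1) x).symm.eq

lemma key_lemma {R : Type*} [CommRing R] [IsDomain R] [IsNoetherianRing R]
    {m : Ideal R} (hm : m.IsMaximal) {n : ℕ} {A : Matrix (Fin n) (Fin n) R}
    {ℓ : ℕ} (hℓ1 : 1 ≤ ℓ) (hA : A ^ ℓ = 1) (hℓm : (ℓ : R) ∉ m)
    (hmem : ∀ i j, A i j - (1 : Matrix (Fin n) (Fin n) R) i j ∈ m) : A = 1 := by
  set x : Matrix (Fin n) (Fin n) R := A - 1 with hx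
  obtain ⟨B, hB⟩ := pow_expand x ℓ hℓ1
  rw [show x + 1 = A from sub_add_cancel A 1, hA] at hB
  have hkey : ∀ i j, (ℓ : R) * x i j = -((x * x * B) i j) := by
    intro i j
    have h0 : (x * x * B + ℓ • x) i j = (0 : Matrix (Fin n) (Fin n) R) i j := by
      have : x * x * B + ℓ • x = 0 := by
        have := hB.symm
        rwa [add_eq_right] at this
      rw [this]
    simp only [Matrix.add_apply, Matrix.smul_apply, Matrix.zero_apply] at h0
    rw [nsmul_eq_mul] at h0
    linear_combination h0
  have hstep : ∀ s : ℕ, 1 ≤ s → (∀ i j, x i j ∈ m ^ s) → (∀ i j, x i j ∈ m ^ (s + 1)) := by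
    intro s hs hmemx i j
    have hxx : ∀ i j, (x * x) i j ∈ m ^ (s + 1) := by
      intro i j
      rw [Matrix.mul_apply]
      refine Ideal.sum_mem _ fun k _ => ?_
      have h2s : x i k * x k j ∈ m ^ (s + s) := by
        rw [pow_add]
        exact Ideal.mul_mem_mul (hmemx i k) (hmemx k j)
      exact Ideal.pow_le_pow_right (by omega) h2s
    have hrhs : ((x * x * B) i j) ∈ m ^ (s + 1) := by
      rw [Matrix.mul_apply]
      exact Ideal.sum_mem _ fun k _ => Ideal.mul_mem_right _ _ (hxx i k)
    have hmul : x i j * (ℓ : R) ∈ m ^ (s + 1) := by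
      rw [mul_comm, hkey i j]
      exact neg_mem hrhs
    have hprim : (m ^ (s + 1)).IsPrimary := by
      apply Ideal.isPrimary_of_isMaximal_radical
      rwa [m.radical_pow (Nat.succ_ne_zero s), hm.isPrime.radical]
    rcases (Ideal.isPrimary_iff.mp hprim).2 hmul with h | h
    · exact h
    · exact absurd (by rwa [m.radical_pow (Nat.succ_ne_zero s), hm.isPrime.radical] at h) hℓm
  have hall : ∀ s : ℕ, ∀ i j, x i j ∈ m ^ s := by
    intro s
    induction s with
    | zero => intro i j; simp
    | succ t ih =>
      rcases Nat.eq_zero_or_pos t with rfl | ht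
      · intro i j; simpa [hx] using hmem i j
      · exact hstep t ht ih
  have hbot : ∀ i j, x i j = 0 := by
    intro i j
    have : x i j ∈ ⨅ s : ℕ, m ^ s := Ideal.mem_iInf.mpr fun s => hall s i j
    rwa [Ideal.iInf_pow_eq_bot_of_isDomain m hm.ne_top, Ideal.mem_bot] at this
  have : x = 0 := by ext i j; exact hbot i j
  exact sub_eq_zero.mp (hx ▸ this)

lemma int_isJacobson : IsJacobsonRing ℤ := by
  rw [isJacobsonRing_iff_prime_eq]
  intro P hP
  rcases eq_or_ne P ⊥ with rfl | hbot
  · refine le_antisymm ?_ Ideal.le_jacobson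
    intro x hx
    have h := Ideal.mem_jacobson_bot.mp hx x
    rw [Int.isUnit_iff] at h
    have : x = 0 := by rcases h with h | h <;> nlinarith
    simp [this]
  · exact Ideal.jacobson_eq_self_of_isMaximal (H := IsPrime.to_maximal_ideal hbot)


/-- Abstract form of Selberg's lemma: a group embedding into `GL_n` of a
finitely generated Jacobson Noetherian domain of characteristic zero has a
finite-index subgroup with no nontrivial torsion. -/
theorem selberg_aux {Γ : Type*} [Group Γ] {n : ℕ} {A : Type*} [CommRing A] [IsDomain A]
    [IsNoetherianRing A] [IsJacobsonRing A] [CharZero A] (hft : Algebra.FiniteType ℤ A)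
    (ρ : Γ →* (Matrix (Fin n) (Fin n) A)ˣ) (hρ : Function.Injective ρ) :
    ∃ H : Subgroup Γ, H.FiniteIndex ∧ ∀ γ ∈ H, ∀ d : ℕ, 1 ≤ d → γ ^ d = 1 → γ = 1 := by
  classical
  haveI : IsJacobsonRing ℤ := int_isJacobson
  -- reduction mod a maximal ideal
  let red : ∀ m : Ideal A, Γ →* (Matrix (Fin n) (Fin n) (A ⧸ m))ˣ := fun m =>
    (Units.map ((Ideal.Quotient.mk m).mapMatrix).toMonoidHom).comp ρ
  -- the kernel condition gives congruence to 1 mod m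
  have hredker : ∀ (m : Ideal A) (γ : Γ), γ ∈ (red m).ker →
      ∀ i j, (ρ γ).val i j - (1 : Matrix (Fin n) (Fin n) A) i j ∈ m := by
    intro m γ hγ i j
    have h1 : (Ideal.Quotient.mk m).mapMatrix (ρ γ).val
        = (Ideal.Quotient.mk m).mapMatrix 1 := by
      rw [map_one]
      exact congrArg Units.val hγ
    have h2 := congrArg (fun M => M i j) h1
    simp only [RingHom.mapMatrix_apply, Matrix.map_apply] at h2
    exact Ideal.Quotient.eq.mp h2
  -- characteristic of residue fields
  have hchar : ∀ m : Ideal A, m.IsMaximal →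
      (ringChar (A ⧸ m)).Prime ∧ Finite (A ⧸ m) := by
    intro m hm
    haveI := hm
    letI : Field (A ⧸ m) := Ideal.Quotient.field m
    haveI : Algebra.FiniteType ℤ (A ⧸ m) :=
      hft.of_surjective (Ideal.Quotient.mkₐ ℤ m) (Ideal.Quotient.mkₐ_surjective ℤ m)
    haveI : Module.Finite ℤ (A ⧸ m) := finite_of_finite_type_of_isJacobsonRing ℤ _
    haveI : Algebra.IsIntegral ℤ (A ⧸ m) := Algebra.IsIntegral.of_finite ℤ _
    haveI hcp : CharP (A ⧸ m) (ringChar (A ⧸ m)) := ringChar.charP _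
    have hp : (ringChar (A ⧸ m)).Prime := by
      rcases CharP.char_is_prime_or_zero (A ⧸ m) (ringChar (A ⧸ m)) with h | h
      · exact h
      · exfalso
        haveI : CharP (A ⧸ m) 0 := h ▸ hcp
        haveI : CharZero (A ⧸ m) := CharP.charP_to_charZero _
        have hinj : Function.Injective (algebraMap ℚ (A ⧸ m)) :=
          (algebraMap ℚ (A ⧸ m)).injective
        haveI : Algebra.IsIntegral ℤ ℚ :=
          Algebra.IsIntegral.of_injective ((algebraMap ℚ (A ⧸ m)).toIntAlgHom) hinj
        obtain ⟨y, hy⟩ := IsIntegrallyClosed.isIntegral_iff.mp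
          (Algebra.IsIntegral.isIntegral (R := ℤ) ((2 : ℚ)⁻¹))
        have h2 : (2 : ℚ) * (y : ℚ) = 1 := by
          rw [show ((y : ℚ)) = (2 : ℚ)⁻¹ from hy]
          norm_num
        have h3 : (2 * y : ℤ) = 1 := by exact_mod_cast h2
        omega
    refine ⟨hp, ?_⟩
    haveI : NeZero (ringChar (A ⧸ m)) := ⟨hp.ne_zero⟩
    letI : Algebra (ZMod (ringChar (A ⧸ m))) (A ⧸ m) := ZMod.algebra _ _
    haveI : Module.Finite (ZMod (ringChar (A ⧸ m))) (A ⧸ m) :=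
      Module.Finite.of_restrictScalars_finite ℤ _ _
    exact Module.finite_of_finite (ZMod (ringChar (A ⧸ m)))
  -- finite index of the kernels
  have hfinidx : ∀ m : Ideal A, m.IsMaximal → (red m).ker.FiniteIndex := by
    intro m hm
    haveI : Finite (A ⧸ m) := (hchar m hm).2
    haveI : Finite (Matrix (Fin n) (Fin n) (A ⧸ m)) := inferInstance
    haveI : Finite ((Matrix (Fin n) (Fin n) (A ⧸ m))ˣ) := inferInstance
    haveI : Finite (red m).range := inferInstance
    exact Subgroup.finiteIndex_ker (red m)
  -- choose two maximal ideals with different residue characteristics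
  obtain ⟨m1, hm1⟩ := Ideal.exists_maximal A
  set p1 := ringChar (A ⧸ m1) with hp1def
  have hp1 : p1.Prime := (hchar m1 hm1).1
  have hp1R : ((p1 : A)) ≠ 0 := Nat.cast_ne_zero.mpr hp1.ne_zero
  obtain ⟨m2, hm2, hp1m2⟩ : ∃ m2 : Ideal A, m2.IsMaximal ∧ (p1 : A) ∉ m2 := by
    by_contra hcon
    push_neg at hcon
    have hjac : (⊥ : Ideal A).jacobson = ⊥ :=
      IsJacobsonRing.out' ⊥ Ideal.isRadical_bot_of_noZeroDivisors
    have hmemj : (p1 : A) ∈ (⊥ : Ideal A).jacobson := by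
      rw [Ideal.jacobson]
      exact Ideal.mem_sInf.mpr fun {J} hJ => hcon J hJ.2
    rw [hjac, Ideal.mem_bot] at hmemj
    exact hp1R hmemj
  set p2 := ringChar (A ⧸ m2) with hp2def
  have hp2 : p2.Prime := (hchar m2 hm2).1
  have hp12 : p1 ≠ p2 := by
    intro h
    apply hp1m2
    haveI : CharP (A ⧸ m2) p2 := ringChar.charP _
    have : ((p1 : ℕ) : A ⧸ m2) = 0 := by rw [h]; exact CharP.cast_eq_zero _ _
    rwa [← map_natCast (Ideal.Quotient.mk m2), Ideal.Quotient.eq_zero_iff_mem] at this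
  refine ⟨(red m1).ker ⊓ (red m2).ker, ?_, ?_⟩
  · haveI := hfinidx m1 hm1
    haveI := hfinidx m2 hm2
    infer_instance
  · intro γ hγ
    -- kill torsion in the kernel
    have kill : ∀ (m : Ideal A), m.IsMaximal → ∀ ℓ : ℕ, ℓ.Prime → ringChar (A ⧸ m) ≠ ℓ →
        ∀ δ : Γ, δ ∈ (red m).ker → δ ^ ℓ = 1 → δ = 1 := by
      intro m hm ℓ hℓp hpℓ δ hker hδℓ
      haveI := hm
      haveI : CharP (A ⧸ m) (ringChar (A ⧸ m)) := ringChar.charP _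
      have hℓnot : ((ℓ : ℕ) : A) ∉ m := by
        intro hmem'
        have h0 : ((ℓ : ℕ) : A ⧸ m) = 0 := by
          rw [← map_natCast (Ideal.Quotient.mk m)]
          exact Ideal.Quotient.eq_zero_iff_mem.mpr hmem'
        have hdvd := (CharP.cast_eq_zero_iff (A ⧸ m) (ringChar (A ⧸ m)) ℓ).mp h0
        exact hpℓ ((Nat.prime_dvd_prime_iff_eq (hchar m hm).1 hℓp).mp hdvd)
      have hApow : ((ρ δ).val) ^ ℓ = 1 := by
        rw [← Units.val_pow_eq_pow_val, ← map_pow, hδℓ, map_one, Units.val_one]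
      have hmm := hredker m δ hker
      have hA1 : (ρ δ).val = 1 := key_lemma hm hℓp.one_lt.le hApow hℓnot hmm
      apply hρ
      rw [map_one]
      exact Units.ext hA1
    -- strong induction to reduce to prime order
    intro d
    induction d using Nat.strong_induction_on with
    | _ d ih =>
      intro hd1 hδd
      rcases eq_or_lt_of_le hd1 with h1 | h2
      · rwa [← h1, pow_one] at hδd
      · set ℓ := d.minFac with hℓdef
        have hℓp : ℓ.Prime := Nat.minFac_prime (by omega)
        have hdvd : ℓ ∣ d := Nat.minFac_dvd d
        set e := d / ℓ with hedef
        have hed : e * ℓ = d := Nat.div_mul_cancel hdvd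
        have he1 : 1 ≤ e := Nat.one_le_div_iff hℓp.pos |>.mpr (Nat.le_of_dvd (by omega) hdvd)
        have hεpow : (γ ^ e) ^ ℓ = 1 := by rw [← pow_mul, hed, hδd]
        have hεmem : γ ^ e ∈ (red m1).ker ⊓ (red m2).ker := pow_mem hγ e
        have hδe : γ ^ e = 1 := by
          rcases eq_or_ne p1 ℓ with hq | hq
          · refine kill m2 hm2 ℓ hℓp ?_ (γ ^ e) hεmem.2 hεpow
            intro hh
            exact hp12 (hq.trans hh.symm)
          · exact kill m1 hm1 ℓ hℓp hq (γ ^ e) hεmem.1 hεpow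
        have helt : e < d := Nat.div_lt_self (by omega) hℓp.two_le
        have := ih e helt he1
        -- γ ^ e = 1 means γ ^ e ... we need γ = 1 from γ ^ e = 1
        exact ih e helt he1 hδe

set_option maxHeartbeats 1000000 in
set_option synthInstance.maxHeartbeats 100000 in
/-- A finitely generated linear group `Γ` acting properly discontinuously
on a Hausdorff space `X` has a finite index subgroup acting freely. -/
theorem stmt13 {Γ : Type*} [Group Γ] (hfg : Group.FG Γ)
    (hlin : ∃ (n : ℕ) (f : Γ →* Matrix.GeneralLinearGroup (Fin n) ℝ), Function.Injective f)
    {X : Type*} [TopologicalSpace X] [T2Space X] [MulAction Γ X]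
    (hpd : ∀ K L : Set X, IsCompact K → IsCompact L →
      {γ : Γ | ((γ • K) ∩ L).Nonempty}.Finite) :
    ∃ H : Subgroup Γ, H.FiniteIndex ∧ ∀ γ ∈ H, ∀ x : X, γ • x = x → γ = 1 := by
  classical
  haveI : IsJacobsonRing ℤ := int_isJacobson
  obtain ⟨n, f, hf⟩ := hlin
  obtain ⟨S, hScl, hSfin⟩ := Group.fg_iff.mp hfg
  set T : Set ℝ := ⋃ s ∈ S, ((Set.range fun p : Fin n × Fin n => (f s).val p.1 p.2) ∪
      (Set.range fun p : Fin n × Fin n => (f s⁻¹).val p.1 p.2)) with hT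
  have hTfin : T.Finite :=
    hSfin.biUnion fun s _ => (Set.finite_range _).union (Set.finite_range _)
  set R : Subalgebra ℤ ℝ := Algebra.adjoin ℤ T with hR
  have hRfg : R.FG := Subalgebra.fg_def.mpr ⟨T, hTfin, rfl⟩
  haveI hRft : Algebra.FiniteType ℤ ↥R := (Subalgebra.fg_iff_finiteType R).mp hRfg
  haveI : IsNoetherianRing ↥R := Algebra.FiniteType.isNoetherianRing ℤ ↥R
  haveI : IsJacobsonRing ↥R := isJacobsonRing_of_finiteType (A := ℤ)
  haveI : IsDomain ↥R := inferInstance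
  haveI : CharZero ↥R :=
    ⟨fun a b h => Nat.cast_injective (R := ℝ) (by simpa using congrArg R.val h)⟩
  -- all entries of all f γ lie in R
  have hall : ∀ γ : Γ, ∀ i j, (f γ).val i j ∈ R := by
    let G0 : Subgroup Γ :=
      { carrier := {γ | (∀ i j, (f γ).val i j ∈ R) ∧ (∀ i j, (f γ⁻¹).val i j ∈ R)}
        one_mem' := by
          constructor <;> intro i j
          · rw [map_one, Units.val_one, Matrix.one_apply]
            split_ifs
            exacts [R.one_mem, R.zero_mem]
          · rw [inv_one, map_one, Units.val_one, Matrix.one_apply]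
            split_ifs
            exacts [R.one_mem, R.zero_mem]
        mul_mem' := by
          rintro a b ⟨ha1, ha2⟩ ⟨hb1, hb2⟩
          constructor <;> intro i j
          · rw [map_mul, Units.val_mul, Matrix.mul_apply]
            exact Subalgebra.sum_mem R fun k _ => R.mul_mem (ha1 i k) (hb1 k j)
          · rw [mul_inv_rev, map_mul, Units.val_mul, Matrix.mul_apply]
            exact Subalgebra.sum_mem R fun k _ => R.mul_mem (hb2 i k) (ha2 k j)
        inv_mem' := by
          rintro a ⟨ha1, ha2⟩
          refine ⟨ha2, ?_⟩
          simpa using ha1 }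
    have hsub : S ⊆ ↑G0 := by
      intro s hs
      constructor <;> intro i j <;> apply Algebra.subset_adjoin
      · exact Set.mem_biUnion hs (Or.inl ⟨(i, j), rfl⟩)
      · exact Set.mem_biUnion hs (Or.inr ⟨(i, j), rfl⟩)
    have hG0 : G0 = ⊤ := top_unique (hScl ▸ (Subgroup.closure_le G0).mpr hsub)
    intro γ
    have : γ ∈ G0 := hG0 ▸ Subgroup.mem_top γ
    exact this.1
  clear_value T R
  -- the matrix over R
  let F : Γ → Matrix (Fin n) (Fin n) ↥R := fun γ =>
    Matrix.of fun i j => (⟨(f γ).val i j, hall γ i j⟩ : ↥R)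
  let ν : Matrix (Fin n) (Fin n) ↥R →+* Matrix (Fin n) (Fin n) ℝ :=
    (R.val.toRingHom).mapMatrix
  have hν : ∀ γ, ν (F γ) = (f γ).val := fun γ => rfl
  have hνinj : Function.Injective ν := by
    intro M N h
    ext i j
    have := congrArg (fun M => M i j) h
    simp only [ν, RingHom.mapMatrix_apply, Matrix.map_apply] at this
    exact this
  have hFone : F 1 = 1 := hνinj (by rw [hν, map_one f, Units.val_one, map_one])
  have hFmul : ∀ a b, F (a * b) = F a * F b := fun a b =>
    hνinj (by rw [map_mul ν, hν, hν, hν, map_mul f, Units.val_mul])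
  have hFpow : ∀ (γ : Γ) (k : ℕ), F (γ ^ k) = F γ ^ k := by
    intro γ k
    induction k with
    | zero => simpa using hFone
    | succ t ih => rw [pow_succ, pow_succ, hFmul, ih]
  have hFinv : ∀ γ : Γ, F γ * F γ⁻¹ = 1 ∧ F γ⁻¹ * F γ = 1 := by
    intro γ
    constructor
    · rw [← hFmul, mul_inv_cancel, hFone]
    · rw [← hFmul, inv_mul_cancel, hFone]
  -- the unit-group representation over R
  let ρ : Γ →* (Matrix (Fin n) (Fin n) ↥R)ˣ :=
    { toFun := fun γ => ⟨F γ, F γ⁻¹, (hFinv γ).1, (hFinv γ).2⟩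
      map_one' := by
        apply Units.ext
        exact hFone
      map_mul' := by
        intro a b
        apply Units.ext
        exact hFmul a b }
  have hρ : Function.Injective ρ := by
    intro a b h
    apply hf
    apply Units.ext
    rw [← hν a, ← hν b]
    exact congrArg ν (congrArg Units.val h)
  obtain ⟨H, hHfi, hHtor⟩ := selberg_aux hRft ρ hρ
  refine ⟨H, hHfi, ?_⟩
  intro γ hγ x hx
  -- γ has finite order
  have hfinstab := hpd {x} {x} isCompact_singleton isCompact_singleton
  have hpowfix : ∀ k : ℕ, γ ^ k • x = x := by
    intro k
    induction k with
    | zero => simp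
    | succ t ih => rw [pow_succ, mul_smul, hx, ih]
  have hmemS0 : ∀ k : ℕ, γ ^ k ∈ {δ : Γ | ((δ • ({x} : Set X)) ∩ {x}).Nonempty} := by
    intro k
    refine ⟨x, ?_, rfl⟩
    rw [Set.smul_set_singleton, hpowfix k]
    exact rfl
  haveI := hfinstab.to_subtype
  obtain ⟨k, l, hkl, hpe⟩ := Finite.exists_ne_map_eq_of_infinite
    (fun k : ℕ => (⟨γ ^ k, hmemS0 k⟩ :
      {δ : Γ // δ ∈ {δ : Γ | ((δ • ({x} : Set X)) ∩ {x}).Nonempty}}))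
  have hpe' : γ ^ k = γ ^ l := congrArg Subtype.val hpe
  have hd : ∃ d : ℕ, 1 ≤ d ∧ γ ^ d = 1 := by
    rcases lt_or_gt_of_ne hkl with h | h
    · refine ⟨l - k, by omega, ?_⟩
      have h1 : γ ^ (k + (l - k)) = γ ^ k * 1 := by
        rw [show k + (l - k) = l from by omega, mul_one, ← hpe']
      rw [pow_add] at h1
      exact mul_left_cancel h1
    · refine ⟨k - l, by omega, ?_⟩
      have h1 : γ ^ (l + (k - l)) = γ ^ l * 1 := by
        rw [show l + (k - l) = k from by omega, mul_one, hpe']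
      rw [pow_add] at h1
      exact mul_left_cancel h1
  obtain ⟨d, hd1, hgd⟩ := hd
  exact hHtor γ hγ d hd1 hgd
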